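/- Let μ be a probability measure on ℝ with finite first moment, let F(x) = μ((−∞, x]) be its cumulative distribution function, and let F⁻¹(ω) = inf { x : ω ≤ F(x) } for ω ∈ (0,1) be its quantile function. Then the expectation of μ equals the integral of the quantile function over (0,1): ∫_ℝ x dμ(x) = ∫_0^1 F⁻¹(ω) dω. -/

import Mathlib

open MeasureTheory Set Filter ProbabilityTheory
open scoped Topology

section Aux

variable (μ : Measure ℝ) [IsProbabilityMeasure μ]

/-- The set defining the quantile function equals the cdf-version. -/
lemma quantile_set_eq (ω : ℝ) :
    {x : ℝ | ω ≤ (μ (Set.Iic x)).toReal} = {x : ℝ | ω ≤ cdf μ x} := by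
  ext x; simp [cdf_eq_real, measureReal_def]

lemma quantile_nonempty {ω : ℝ} (hω : ω < 1) : {x : ℝ | ω ≤ cdf μ x}.Nonempty := by
  have h := (tendsto_cdf_atTop μ).eventually (eventually_ge_nhds hω)
  exact h.exists

lemma quantile_bddBelow {ω : ℝ} (hω : 0 < ω) : BddBelow {x : ℝ | ω ≤ cdf μ x} := by
  have h := (tendsto_cdf_atBot μ).eventually (eventually_lt_nhds hω)
  obtain ⟨y, hy⟩ := h.exists
  refine ⟨y, fun z hz => ?_⟩
  by_contra hzy
  push_neg at hzy
  exact absurd (le_trans hz (monotone_cdf μ hzy.le)) (not_le.2 hy)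

/-- Galois connection for the quantile function. -/
lemma quantile_le_iff {ω : ℝ} (hω0 : 0 < ω) (hω1 : ω < 1) (x : ℝ) :
    sInf {x : ℝ | ω ≤ cdf μ x} ≤ x ↔ ω ≤ cdf μ x := by
  constructor
  · intro h
    -- for all x' > x, ω ≤ cdf μ x'
    have h' : ∀ x' ∈ Set.Ioi x, ω ≤ cdf μ x' := by
      intro x' hx'
      have hlt : sInf {x : ℝ | ω ≤ cdf μ x} < x' := lt_of_le_of_lt h hx'
      obtain ⟨z, hz, hzx'⟩ :=
        (csInf_lt_iff (quantile_bddBelow μ hω0) (quantile_nonempty μ hω1)).1 hlt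
      exact le_trans hz (monotone_cdf μ hzx'.le)
    have htend : Filter.Tendsto (cdf μ) (𝓝[>] x) (𝓝 (cdf μ x)) :=
      ((cdf μ).right_continuous x).tendsto.mono_left
        (nhdsWithin_mono x Set.Ioi_subset_Ici_self)
    exact ge_of_tendsto htend (eventually_mem_nhdsWithin.mono h')
  · intro h
    exact csInf_le (quantile_bddBelow μ hω0) h

end Aux

/-- The expectation of a probability measure `μ` on `ℝ` with finite first moment equals
the integral of its quantile function over `(0,1)`:
`∫ x dμ = ∫_0^1 F⁻¹(ω) dω` where `F⁻¹(ω) = inf {x | ω ≤ F x}` and `F x = μ (Iic x)`. -/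
theorem expectation_eq_integral_quantile (μ : Measure ℝ) [IsProbabilityMeasure μ]
    (hint : Integrable (fun x : ℝ => x) μ) :
    (∫ x, x ∂μ) =
      ∫ ω in Set.Ioo (0:ℝ) 1, sInf {x : ℝ | ω ≤ (μ (Set.Iic x)).toReal} := by
  classical
  set g : ℝ → ℝ := fun ω => sInf {x : ℝ | ω ≤ cdf μ x} with hg
  set g' : ℝ → ℝ := fun ω => if ω ∈ Set.Ioo (0:ℝ) 1 then g ω else 0 with hg'
  set ν : Measure ℝ := volume.restrict (Set.Ioo (0:ℝ) 1) with hν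
  -- preimage of Iic under g'
  have hpre : ∀ x : ℝ, g' ⁻¹' Set.Iic x =
      (Set.Ioo (0:ℝ) 1 ∩ Set.Iic (cdf μ x)) ∪ ((Set.Ioo (0:ℝ) 1)ᶜ ∩ {ω : ℝ | (0:ℝ) ≤ x}) := by
    intro x
    ext ω
    by_cases hω : ω ∈ Set.Ioo (0:ℝ) 1
    · simp only [Set.mem_preimage, Set.mem_Iic, hg', if_pos hω, Set.mem_union, Set.mem_inter_iff,
        hω, Set.mem_compl_iff, not_true, false_and, or_false, true_and, Set.mem_Iic]
      exact quantile_le_iff μ hω.1 hω.2 x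
    · simp only [Set.mem_preimage, Set.mem_Iic, hg', if_neg hω, Set.mem_union, Set.mem_inter_iff,
        hω, Set.mem_compl_iff, not_false_iff, false_and, false_or, true_and, Set.mem_setOf_eq, if_false]
  have hg'meas : Measurable g' := by
    apply measurable_of_Iic
    intro x
    rw [hpre x]
    exact ((measurableSet_Ioo.inter measurableSet_Iic).union
      (measurableSet_Ioo.compl.inter (MeasurableSet.const _)))
  -- the pushforward of ν under g' is μ
  have hmap : Measure.map g' ν = μ := by
    have hprob : IsProbabilityMeasure ν := by
      constructor
      rw [hν, Measure.restrict_apply MeasurableSet.univ, Set.univ_inter, Real.volume_Ioo]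
      norm_num
    have : IsProbabilityMeasure (Measure.map g' ν) :=
      Measure.isProbabilityMeasure_map hg'meas.aemeasurable
    refine Measure.ext_of_Iic _ _ (fun x => ?_)
    rw [Measure.map_apply hg'meas measurableSet_Iic, hν,
      Measure.restrict_apply (hg'meas measurableSet_Iic), hpre x]
    have hsimp : ((Set.Ioo (0:ℝ) 1 ∩ Set.Iic (cdf μ x)) ∪
        ((Set.Ioo (0:ℝ) 1)ᶜ ∩ {ω : ℝ | (0:ℝ) ≤ x})) ∩ Set.Ioo (0:ℝ) 1 =
        Set.Ioo (0:ℝ) 1 ∩ Set.Iic (cdf μ x) := by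
      ext ω
      constructor
      · rintro ⟨h1 | h1, h2⟩
        · exact h1
        · exact absurd h2 h1.1
      · intro h; exact ⟨Or.inl h, h.1⟩
    rw [hsimp]
    -- volume (Ioo 0 1 ∩ Iic t) = ofReal t for t ∈ [0,1]
    have h0 : 0 ≤ cdf μ x := cdf_nonneg μ x
    have h1 : cdf μ x ≤ 1 := cdf_le_one μ x
    rcases lt_or_eq_of_le h1 with h1' | h1'
    · have : Set.Ioo (0:ℝ) 1 ∩ Set.Iic (cdf μ x) = Set.Ioc 0 (cdf μ x) := by
        ext ω
        simp only [Set.mem_inter_iff, Set.mem_Ioo, Set.mem_Iic, Set.mem_Ioc]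
        constructor
        · rintro ⟨⟨a, b⟩, c⟩; exact ⟨a, c⟩
        · rintro ⟨a, b⟩; exact ⟨⟨a, lt_of_le_of_lt b h1'⟩, b⟩
      rw [this, Real.volume_Ioc, sub_zero, ← ofReal_cdf]
    · have : Set.Ioo (0:ℝ) 1 ∩ Set.Iic (cdf μ x) = Set.Ioo 0 1 := by
        rw [Set.inter_eq_left]
        intro ω hω
        exact le_trans hω.2.le (by rw [h1'])
      rw [this, Real.volume_Ioo, sub_zero, ← ofReal_cdf, ← h1']
  -- transfer the integral
  have hae : g' =ᵐ[ν] g := by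
    filter_upwards [ae_restrict_mem measurableSet_Ioo] with ω hω
    simp only [hg', if_pos hω]
  calc (∫ x, x ∂μ) = ∫ x, x ∂(Measure.map g' ν) := by rw [hmap]
    _ = ∫ ω, g' ω ∂ν := by
        rw [integral_map hg'meas.aemeasurable]
        rw [hmap]
        exact hint.aestronglyMeasurable
    _ = ∫ ω, g ω ∂ν := integral_congr_ae hae
    _ = ∫ ω in Set.Ioo (0:ℝ) 1, sInf {x : ℝ | ω ≤ (μ (Set.Iic x)).toReal} := by
        refine integral_congr_ae (Filter.Eventually.of_forall fun ω => ?_)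
        rw [hg]
        simp only [quantile_set_eq μ ω]
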